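/- arXiv:1010.4055 — 3 statements merged into one kernel-verified Lean document; each statement's English description precedes it below -/
import Mathlib

section
/- Let (R_n) be a sequence of real random variables on a probability space, uniformly bounded below by a constant -c. Then there exist forward convex combinations R¹_n ∈ conv(R_n, R_{n+1}, ...) and a random variable R_* with values in [-c, ∞] such that R¹_n → R_* almost surely. -/
open MeasureTheory Filter

namespace DSKomlos

set_option linter.unusedSectionVars false

variable {Ω : Type*} [MeasurableSpace Ω]

def IsConv (R : ℕ → Ω → ℝ) (n : ℕ) (Y : Ω → ℝ) : Prop :=
  ∃ (s : Finset ℕ) (lam : ℕ → ℝ),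
    (∀ m ∈ s, n ≤ m) ∧ (∀ m, 0 ≤ lam m) ∧ (∑ m ∈ s, lam m = 1) ∧
    Y = fun ω => ∑ m ∈ s, lam m * R m ω

theorem isConv_self (R : ℕ → Ω → ℝ) (n : ℕ) : IsConv R n (R n) := by
  refine ⟨{n}, fun _ => 1, by simp, fun _ => zero_le_one, by simp, by simp⟩

theorem isConv_mono {R : ℕ → Ω → ℝ} {n n' : ℕ} (h : n ≤ n') {Y : Ω → ℝ}
    (hY : IsConv R n' Y) : IsConv R n Y := by
  obtain ⟨s, lam, hs, h0, h1, hfun⟩ := hY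
  exact ⟨s, lam, fun m hm => h.trans (hs m hm), h0, h1, hfun⟩

theorem isConv_midpoint {R : ℕ → Ω → ℝ} {n : ℕ} {Y Z : Ω → ℝ}
    (hY : IsConv R n Y) (hZ : IsConv R n Z) :
    IsConv R n (fun ω => (Y ω + Z ω) / 2) := by
  obtain ⟨s, a, hs, ha0, ha1, hYf⟩ := hY
  obtain ⟨t, b, ht, hb0, hb1, hZf⟩ := hZ
  set A : ℕ → ℝ := fun m => if m ∈ s then a m else 0 with hA
  set B : ℕ → ℝ := fun m => if m ∈ t then b m else 0 with hB
  have hAR : ∀ ω, ∑ m ∈ s ∪ t, A m * R m ω = ∑ m ∈ s, a m * R m ω := by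
    intro ω
    rw [← Finset.sum_subset Finset.subset_union_left
      (fun m _ hm => by simp [hA, hm])]
    exact Finset.sum_congr rfl fun m hm => by simp [hA, hm]
  have hBR : ∀ ω, ∑ m ∈ s ∪ t, B m * R m ω = ∑ m ∈ t, b m * R m ω := by
    intro ω
    rw [← Finset.sum_subset Finset.subset_union_right
      (fun m _ hm => by simp [hB, hm])]
    exact Finset.sum_congr rfl fun m hm => by simp [hB, hm]
  have hAs : ∑ m ∈ s ∪ t, A m = 1 := by
    rw [← Finset.sum_subset Finset.subset_union_left (fun m _ hm => by simp [hA, hm])]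
    rw [← ha1]; exact Finset.sum_congr rfl fun m hm => by simp [hA, hm]
  have hBs : ∑ m ∈ s ∪ t, B m = 1 := by
    rw [← Finset.sum_subset Finset.subset_union_right (fun m _ hm => by simp [hB, hm])]
    rw [← hb1]; exact Finset.sum_congr rfl fun m hm => by simp [hB, hm]
  refine ⟨s ∪ t, fun m => (A m + B m) / 2, ?_, ?_, ?_, ?_⟩
  · intro m hm
    rcases Finset.mem_union.1 hm with hm | hm
    exacts [hs m hm, ht m hm]
  · intro m
    have : 0 ≤ A m := by by_cases h : m ∈ s <;> simp [hA, h, ha0 m]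
    have : 0 ≤ B m := by by_cases h : m ∈ t <;> simp [hB, h, hb0 m]
    positivity
  · rw [show (fun m => (A m + B m) / 2) = fun m => (A m + B m) / 2 from rfl]
    rw [← Finset.sum_div, Finset.sum_add_distrib, hAs, hBs]; norm_num
  · funext ω
    have : ∀ m ∈ s ∪ t, (A m + B m) / 2 * R m ω
        = (A m * R m ω + B m * R m ω) / 2 := by intros; ring
    rw [Finset.sum_congr rfl this, ← Finset.sum_div, Finset.sum_add_distrib, hAR, hBR,
      hYf, hZf]

theorem isConv_bdd {R : ℕ → Ω → ℝ} {c : ℝ} (hbdd : ∀ n ω, -c ≤ R n ω) {n : ℕ}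
    {Y : Ω → ℝ} (hY : IsConv R n Y) : ∀ ω, -c ≤ Y ω := by
  obtain ⟨s, lam, hs, h0, h1, hfun⟩ := hY
  intro ω
  rw [hfun]
  calc -c = ∑ m ∈ s, lam m * (-c) := by rw [← Finset.sum_mul, h1, one_mul]
    _ ≤ ∑ m ∈ s, lam m * R m ω :=
      Finset.sum_le_sum fun m _ => mul_le_mul_of_nonneg_left (hbdd m ω) (h0 m)

theorem isConv_meas {R : ℕ → Ω → ℝ} (hmeas : ∀ n, Measurable (R n)) {n : ℕ}
    {Y : Ω → ℝ} (hY : IsConv R n Y) : Measurable Y := by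
  obtain ⟨s, lam, hs, h0, h1, hfun⟩ := hY
  rw [hfun]
  exact Finset.measurable_sum s fun m _ => (hmeas m).const_mul _

noncomputable def phi (c x : ℝ) : ℝ := 1 - Real.exp (-(x + c))

theorem phi_nonneg {c x : ℝ} (h : -c ≤ x) : 0 ≤ phi c x := by
  have : Real.exp (-(x + c)) ≤ 1 := Real.exp_le_one_iff.2 (by linarith)
  simp [phi]; linarith

theorem phi_lt_one (c x : ℝ) : phi c x < 1 := by
  unfold phi; linarith [Real.exp_pos (-(x + c))]

theorem phi_cont (c : ℝ) : Continuous (phi c) := by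
  unfold phi; fun_prop

theorem phi_key {c x y : ℝ} (hx : -c ≤ x) (hy : -c ≤ y) :
    (phi c x - phi c y) ^ 2 / 8 + (phi c x + phi c y) / 2 ≤ phi c ((x + y) / 2) := by
  set u := Real.exp (-(x + c)) with hu
  set v := Real.exp (-(y + c)) with hv
  set e := Real.exp (-((x + y) / 2 + c)) with he
  have hu1 : u ≤ 1 := Real.exp_le_one_iff.2 (by linarith)
  have hv1 : v ≤ 1 := Real.exp_le_one_iff.2 (by linarith)
  have he1 : e ≤ 1 := Real.exp_le_one_iff.2 (by linarith)
  have hu0 : 0 < u := Real.exp_pos _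
  have hv0 : 0 < v := Real.exp_pos _
  have he0 : 0 < e := Real.exp_pos _
  have he2 : e ^ 2 = u * v := by
    rw [sq, hu, hv, he, ← Real.exp_add, ← Real.exp_add]; ring_nf
  have hfact : 0 ≤ u + v - 2 * e := by
    nlinarith [sq_nonneg (u - v)]
  have key : (u - v) ^ 2 ≤ 8 * ((u + v) / 2 - e) := by
    nlinarith [mul_nonneg hfact (by linarith : (0:ℝ) ≤ 4 - (u + v + 2 * e))]
  simp only [phi, ← hu, ← hv, ← he]
  nlinarith [key]

end DSKomlos

namespace DSKomlos
open Filter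

theorem exists_ereal_limit {c L : ℝ} {x : ℕ → ℝ} (hx : ∀ n, -c ≤ x n)
    (h : Tendsto (fun n => phi c (x n)) atTop (nhds L)) :
    ∃ y : EReal, ((-c : ℝ) : EReal) ≤ y ∧
      Tendsto (fun n => ((x n : ℝ) : EReal)) atTop (nhds y) := by
  have hL1 : L ≤ 1 := le_of_tendsto h (Eventually.of_forall fun n => (phi_lt_one _ _).le)
  have hL0 : 0 ≤ L := ge_of_tendsto h (Eventually.of_forall fun n => phi_nonneg (hx n))
  have hid : ∀ n, x n = -c - Real.log (1 - phi c (x n)) := by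
    intro n
    have : 1 - phi c (x n) = Real.exp (-(x n + c)) := by unfold phi; ring
    rw [this, Real.log_exp]; ring
  have htend1 : Tendsto (fun n => 1 - phi c (x n)) atTop (nhds (1 - L)) :=
    (tendsto_const_nhds.sub h)
  rcases lt_or_ge L 1 with hL | hL
  · -- finite limit
    have hpos : (0:ℝ) < 1 - L := by linarith
    have hlog : Tendsto (fun n => Real.log (1 - phi c (x n))) atTop
        (nhds (Real.log (1 - L))) :=
      ((Real.continuousAt_log hpos.ne').tendsto).comp htend1
    have hxlim : Tendsto x atTop (nhds (-c - Real.log (1 - L))) := by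
      have := tendsto_const_nhds (x := (-c : ℝ)) (f := atTop (α := ℕ)) |>.sub hlog
      refine this.congr fun n => (hid n).symm
    refine ⟨((-c - Real.log (1 - L) : ℝ) : EReal), ?_, ?_⟩
    · rw [EReal.coe_le_coe_iff]
      have : Real.log (1 - L) ≤ 0 := Real.log_nonpos (by linarith) (by linarith)
      linarith
    · exact (EReal.tendsto_coe).2 hxlim
  · -- limit is 1, x n → ⊤
    have hLeq : L = 1 := le_antisymm hL1 hL
    have h0 : Tendsto (fun n => 1 - phi c (x n)) atTop (nhds 0) := by
      rw [hLeq] at htend1; simpa using htend1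
    have h0' : Tendsto (fun n => 1 - phi c (x n)) atTop (nhdsWithin 0 (Set.Ioi 0)) :=
      tendsto_nhdsWithin_of_tendsto_nhds_of_eventually_within _ h0
        (Eventually.of_forall fun n => by
          simp only [Set.mem_Ioi, sub_pos]; exact phi_lt_one c (x n))
    have hlog : Tendsto (fun n => Real.log (1 - phi c (x n))) atTop atBot :=
      Real.tendsto_log_nhdsGT_zero.comp h0'
    have hxlim : Tendsto x atTop atTop := by
      have hneg : Tendsto (fun n => -Real.log (1 - phi c (x n))) atTop atTop :=
        tendsto_neg_atBot_atTop.comp hlog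
      have : Tendsto (fun n => -c - Real.log (1 - phi c (x n))) atTop atTop :=
        (tendsto_atTop_add_const_left atTop (-c) hneg).congr fun n => by ring
      exact this.congr fun n => (hid n).symm
    refine ⟨⊤, le_top, EReal.tendsto_nhds_top_iff_real.2 fun r => ?_⟩
    filter_upwards [hxlim.eventually_gt_atTop r] with n hn
    exact_mod_cast hn
end DSKomlos

open Filter DSKomlos

/-- Komlós-type lemma of Delbaen–Schachermayer (Lemma A1.1).  Let `(R_n)` be a sequence of
real random variables uniformly bounded below by `-c`.  Then there are forward convex
combinations `R¹_n ∈ conv(R_n, R_{n+1}, …)` and a random variable `R_*` with values in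
`[-c, ∞]` such that `R¹_n → R_*` almost surely. -/
theorem forward_convex_combinations_converge
    {Ω : Type*} [MeasurableSpace Ω] (P : Measure Ω) [IsProbabilityMeasure P]
    (R : ℕ → Ω → ℝ) (hmeas : ∀ n, Measurable (R n))
    (c : ℝ) (hbdd : ∀ n, ∀ ω, -c ≤ R n ω) :
    ∃ (R1 : ℕ → Ω → ℝ) (Rstar : Ω → EReal),
      (∀ n : ℕ, ∃ (s : Finset ℕ) (lam : ℕ → ℝ),
        (∀ m ∈ s, n ≤ m) ∧ (∀ m, 0 ≤ lam m) ∧ (∑ m ∈ s, lam m = 1) ∧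
        R1 n = fun ω => ∑ m ∈ s, lam m * R m ω) ∧
      (∀ ω, ((-c : ℝ) : EReal) ≤ Rstar ω) ∧
      (∀ᵐ ω ∂P, Filter.Tendsto (fun n => ((R1 n ω : ℝ) : EReal))
        Filter.atTop (nhds (Rstar ω))) := by
  classical
  -- integrability of phi ∘ Y for convex combinations Y
  have hphiInt : ∀ {n : ℕ} {Y : Ω → ℝ}, IsConv R n Y →
      Integrable (fun ω => phi c (Y ω)) P := by
    intro n Y hY
    have hYm : Measurable Y := isConv_meas hmeas hY
    have hYb := isConv_bdd hbdd hY
    refine (integrable_const (1:ℝ)).mono'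
      (((phi_cont c).measurable.comp hYm).aestronglyMeasurable) (ae_of_all _ fun ω => ?_)
    rw [Real.norm_eq_abs, abs_le]
    exact ⟨by linarith [phi_nonneg (hYb ω)], (phi_lt_one c (Y ω)).le⟩
  set J : (Ω → ℝ) → ℝ := fun Y => ∫ ω, phi c (Y ω) ∂P with hJ
  have hJ_le_one : ∀ {n : ℕ} {Y : Ω → ℝ}, IsConv R n Y → J Y ≤ 1 := by
    intro n Y hY
    calc J Y ≤ ∫ _, (1:ℝ) ∂P :=
          integral_mono (hphiInt hY) (integrable_const 1) fun ω => (phi_lt_one c (Y ω)).le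
      _ = 1 := by simp
  have hJ_nonneg : ∀ {n : ℕ} {Y : Ω → ℝ}, IsConv R n Y → 0 ≤ J Y := by
    intro n Y hY
    exact integral_nonneg fun ω => phi_nonneg (isConv_bdd hbdd hY ω)
  -- the value function A
  set Sv : ℕ → Set ℝ := fun n => {r | ∃ Y, IsConv R n Y ∧ r = J Y} with hSv
  have hSv_ne : ∀ n, (Sv n).Nonempty := fun n => ⟨J (R n), R n, isConv_self R n, rfl⟩
  have hSv_bdd : ∀ n, BddAbove (Sv n) := by
    rintro n
    exact ⟨1, by rintro r ⟨Y, hY, rfl⟩; exact hJ_le_one hY⟩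
  set A : ℕ → ℝ := fun n => sSup (Sv n) with hA
  have hA_mem : ∀ {n : ℕ} {Y : Ω → ℝ}, IsConv R n Y → J Y ≤ A n := by
    intro n Y hY
    exact le_csSup (hSv_bdd n) ⟨Y, hY, rfl⟩
  have hA_anti : Antitone A := by
    intro n n' h
    refine csSup_le_csSup (hSv_bdd n) (hSv_ne n') ?_
    rintro r ⟨Y, hY, rfl⟩
    exact ⟨Y, isConv_mono h hY, rfl⟩
  have hA_nonneg : ∀ n, 0 ≤ A n :=
    fun n => le_trans (hJ_nonneg (isConv_self R n)) (hA_mem (isConv_self R n))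
  set a : ℝ := ⨅ n, A n with ha
  have hA_bddbelow : BddBelow (Set.range A) := ⟨0, by rintro r ⟨n, rfl⟩; exact hA_nonneg n⟩
  have hA_tendsto : Tendsto A atTop (nhds a) := tendsto_atTop_ciInf hA_anti hA_bddbelow
  have ha_le : ∀ n, a ≤ A n := fun n => ciInf_le hA_bddbelow n
  -- choose indices
  have hN : ∀ k : ℕ, ∃ n, A n < a + (1/4 : ℝ) ^ k := by
    intro k
    have hpos : (0:ℝ) < (1/4 : ℝ) ^ k := by positivity
    exact (hA_tendsto.eventually (gt_mem_nhds (by linarith))).exists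
  choose N hNspec using hN
  set M : ℕ → ℕ := fun k => k + ∑ j ∈ Finset.range (k+1), N j with hM
  have hM_self : ∀ k, k ≤ M k := fun k => Nat.le_add_right _ _
  have hM_mono : Monotone M := by
    intro k l hkl
    exact add_le_add hkl (Finset.sum_le_sum_of_subset
      (Finset.range_subset_range.2 (by omega)))
  have hAM : ∀ k, A (M k) < a + (1/4 : ℝ) ^ k := by
    intro k
    refine lt_of_le_of_lt (hA_anti ?_) (hNspec k)
    calc N k ≤ ∑ j ∈ Finset.range (k+1), N j :=
          Finset.single_le_sum (fun j _ => Nat.zero_le _) (Finset.self_mem_range_succ k)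
      _ ≤ M k := Nat.le_add_left _ _
  -- choose near-optimal convex combinations S k
  have hSex : ∀ k, ∃ Y, IsConv R (M k) Y ∧ A (M k) - (1/4 : ℝ) ^ k < J Y := by
    intro k
    have hpos : (0:ℝ) < (1/4 : ℝ) ^ k := by positivity
    obtain ⟨r, ⟨Y, hY, rfl⟩, hr⟩ :=
      exists_lt_of_lt_csSup (hSv_ne (M k)) (show A (M k) - (1/4:ℝ)^k < A (M k) by linarith)
    exact ⟨Y, hY, hr⟩
  choose S hSconv hSJ using hSex
  have hSb : ∀ k ω, -c ≤ S k ω := fun k => isConv_bdd hbdd (hSconv k)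
  have hSm : ∀ k, Measurable (S k) := fun k => isConv_meas hmeas (hSconv k)
  -- the L² estimate
  have key2 : ∀ k : ℕ,
      ∫ ω, (phi c (S k ω) - phi c (S (k+1) ω)) ^ 2 ∂P ≤ 12 * (1/4 : ℝ) ^ k := by
    intro k
    set T : Ω → ℝ := fun ω => (S k ω + S (k+1) ω) / 2 with hT
    have hTconv : IsConv R (M k) T :=
      isConv_midpoint (hSconv k) (isConv_mono (hM_mono (Nat.le_succ k)) (hSconv (k+1)))
    have hJT : J T ≤ A (M k) := hA_mem hTconv
    -- integrability of the square term
    have hD2int : Integrable (fun ω => (phi c (S k ω) - phi c (S (k+1) ω)) ^ 2) P := by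
      refine (integrable_const (1:ℝ)).mono' ?_ (ae_of_all _ fun ω => ?_)
      · exact ((((phi_cont c).measurable.comp (hSm k)).sub
          ((phi_cont c).measurable.comp (hSm (k+1)))).pow_const 2).aestronglyMeasurable
      · rw [Real.norm_eq_abs, abs_le]
        constructor
        · nlinarith [sq_nonneg (phi c (S k ω) - phi c (S (k+1) ω))]
        · nlinarith [phi_nonneg (hSb k ω), phi_nonneg (hSb (k+1) ω),
            phi_lt_one c (S k ω), phi_lt_one c (S (k+1) ω)]
    have hptwise : ∀ ω, (phi c (S k ω) - phi c (S (k+1) ω)) ^ 2 / 8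
        + (phi c (S k ω) + phi c (S (k+1) ω)) / 2 ≤ phi c (T ω) :=
      fun ω => phi_key (hSb k ω) (hSb (k+1) ω)
    have hint1 : ∫ ω, ((phi c (S k ω) - phi c (S (k+1) ω)) ^ 2 / 8
        + (phi c (S k ω) + phi c (S (k+1) ω)) / 2) ∂P ≤ J T :=
      integral_mono (by
        exact ((hD2int.div_const 8).add
          (((hphiInt (hSconv k)).add (hphiInt (hSconv (k+1)))).div_const 2)))
        (hphiInt hTconv) hptwise
    rw [integral_add
        (show Integrable (fun ω => (phi c (S k ω) - phi c (S (k+1) ω)) ^ 2 / 8) P from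
          hD2int.div_const 8)
        (show Integrable (fun ω => (phi c (S k ω) + phi c (S (k+1) ω)) / 2) P from
          (((hphiInt (hSconv k)).add (hphiInt (hSconv (k+1)))).div_const 2)),
      integral_div, integral_div,
      integral_add (hphiInt (hSconv k)) (hphiInt (hSconv (k+1)))] at hint1
    have h1 : A (M k) - (1/4:ℝ)^k < J (S k) := hSJ k
    have h2 : A (M (k+1)) - (1/4:ℝ)^(k+1) < J (S (k+1)) := hSJ (k+1)
    have h3 : a ≤ A (M (k+1)) := ha_le _
    have h4 : A (M k) < a + (1/4:ℝ)^k := hAM k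
    have h5 : ((1:ℝ)/4)^(k+1) ≤ (1/4:ℝ)^k := by
      rw [pow_succ]
      nlinarith [pow_pos (show (0:ℝ) < 1/4 by norm_num) k]
    change (∫ ω, (phi c (S k ω) - phi c (S (k+1) ω)) ^ 2 ∂P) / 8
      + (J (S k) + J (S (k+1))) / 2 ≤ J T at hint1
    linarith
  -- the L¹ estimate
  set D : ℕ → Ω → ℝ := fun k ω => phi c (S (k+1) ω) - phi c (S k ω) with hD
  have hDm : ∀ k, Measurable (D k) := fun k =>
    ((phi_cont c).measurable.comp (hSm (k+1))).sub ((phi_cont c).measurable.comp (hSm k))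
  have hDb : ∀ k ω, |D k ω| ≤ 1 := by
    intro k ω
    rw [abs_le]
    constructor
    · simp only [hD]
      nlinarith [phi_nonneg (hSb (k+1) ω), phi_lt_one c (S k ω)]
    · simp only [hD]
      nlinarith [phi_nonneg (hSb k ω), phi_lt_one c (S (k+1) ω)]
  have hDint : ∀ k, Integrable (D k) P := fun k =>
    (integrable_const (1:ℝ)).mono' (hDm k).aestronglyMeasurable
      (ae_of_all _ fun ω => by rw [Real.norm_eq_abs]; exact hDb k ω)
  have hD2int' : ∀ k, Integrable (fun ω => D k ω ^ 2) P := fun k =>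
    (integrable_const (1:ℝ)).mono' ((hDm k).pow_const 2).aestronglyMeasurable
      (ae_of_all _ fun ω => by
        rw [Real.norm_eq_abs, abs_le]
        constructor
        · nlinarith [sq_nonneg (D k ω)]
        · nlinarith [hDb k ω, abs_nonneg (D k ω), sq_abs (D k ω)])
  have hDsqEq : ∀ k, ∫ ω, D k ω ^ 2 ∂P ≤ 12 * (1/4 : ℝ) ^ k := by
    intro k
    have heq : (fun ω => D k ω ^ 2)
        = fun ω => (phi c (S k ω) - phi c (S (k+1) ω)) ^ 2 :=
      funext fun ω => by simp only [hD]; ring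
    rw [heq]
    exact key2 k
  have key1 : ∀ k, ∫ ω, |D k ω| ∂P ≤ 7 * (1/2 : ℝ) ^ k := by
    intro k
    set t : ℝ := (1/2 : ℝ) ^ k with htdef
    have ht : 0 < t := by positivity
    have hpt : ∀ ω, |D k ω| ≤ (D k ω ^ 2 + t ^ 2) / (2 * t) := by
      intro ω
      rw [le_div_iff₀ (by positivity)]
      nlinarith [sq_nonneg (|D k ω| - t), sq_abs (D k ω)]
    have hmono : ∫ ω, |D k ω| ∂P ≤ ∫ ω, (D k ω ^ 2 + t ^ 2) / (2 * t) ∂P :=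
      integral_mono (hDint k).abs
        (show Integrable (fun ω => (D k ω ^ 2 + t ^ 2) / (2 * t)) P from
          ((hD2int' k).add (integrable_const _)).div_const _) hpt
    rw [integral_div,
      integral_add (hD2int' k) (integrable_const _), integral_const] at hmono
    simp only [probReal_univ, measure_univ, ENNReal.toReal_one, one_smul] at hmono
    have h12 : ∫ ω, D k ω ^ 2 ∂P ≤ 12 * (1/4 : ℝ) ^ k := hDsqEq k
    have hq : (1/4 : ℝ) ^ k = t ^ 2 := by
      rw [htdef, ← pow_mul, pow_mul']
      norm_num
    rw [hq] at h12
    calc ∫ ω, |D k ω| ∂P ≤ (∫ ω, D k ω ^ 2 ∂P + t ^ 2) / (2 * t) := hmono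
      _ ≤ (12 * t ^ 2 + t ^ 2) / (2 * t) := by
          apply div_le_div_of_nonneg_right ?_ (by positivity)
          · linarith
      _ = 13 / 2 * t := by field_simp; ring
      _ ≤ 7 * t := by linarith
  -- almost sure summability
  have hae : ∀ᵐ ω ∂P, Summable fun k => D k ω := by
    have hsummable : Summable (fun k : ℕ => 7 * (1/2 : ℝ) ^ k) :=
      (summable_geometric_of_lt_one (by norm_num) (by norm_num)).mul_left 7
    have hlt : ∫⁻ ω, ∑' k, (‖D k ω‖₊ : ENNReal) ∂P < ⊤ := by
      simp only [← enorm_eq_nnnorm]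
      rw [lintegral_tsum fun k => ((hDm k).enorm).aemeasurable]
      calc ∑' k, ∫⁻ ω, (‖D k ω‖₊ : ENNReal) ∂P
          ≤ ∑' k, ENNReal.ofReal (7 * (1/2 : ℝ) ^ k) := by
            refine ENNReal.tsum_le_tsum fun k => ?_
            simp only [← enorm_eq_nnnorm]
            rw [← ofReal_integral_norm_eq_lintegral_enorm (hDint k)]
            refine ENNReal.ofReal_le_ofReal ?_
            simpa [Real.norm_eq_abs] using key1 k
        _ < ⊤ := by
            rw [← ENNReal.ofReal_tsum_of_nonneg (fun k => by positivity) hsummable]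
            exact ENNReal.ofReal_lt_top
    have hmeasT : Measurable fun ω => ∑' k, (‖D k ω‖₊ : ENNReal) :=
      Measurable.ennreal_tsum fun k => (hDm k).enorm
    filter_upwards [ae_lt_top hmeasT hlt.ne] with ω hω
    have h1 : Summable fun k => ‖D k ω‖₊ := ENNReal.tsum_coe_ne_top_iff_summable.1 hω.ne
    have h2 : Summable fun k => (‖D k ω‖₊ : ℝ) := NNReal.summable_coe.2 h1
    simp only [coe_nnnorm] at h2
    exact h2.of_norm
  -- define R1 and Rstar
  have hKex : ∀ n : ℕ, ∃ k, n ≤ M k := fun n => ⟨n, hM_self n⟩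
  set K : ℕ → ℕ := fun n => Nat.find (hKex n) with hK
  have hKspec : ∀ n, n ≤ M (K n) := fun n => Nat.find_spec (hKex n)
  have hKtend : Tendsto K atTop atTop := by
    refine tendsto_atTop_atTop.2 fun b => ⟨M b + 1, fun n hn => ?_⟩
    by_contra hcon
    push_neg at hcon
    have h1 : M (K n) ≤ M b := hM_mono (by omega)
    have h2 := hKspec n
    omega
  set R1 : ℕ → Ω → ℝ := fun n => S (K n) with hR1
  have hR1conv : ∀ n, IsConv R n (R1 n) := fun n => isConv_mono (hKspec n) (hSconv (K n))
  set Rstar : Ω → EReal := fun ω => limsup (fun n => ((R1 n ω : ℝ) : EReal)) atTop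
    with hRstar
  refine ⟨R1, Rstar, fun n => hR1conv n, ?_, ?_⟩
  · intro ω
    refine le_limsup_of_frequently_le (Frequently.of_forall fun n => ?_)
      (isBoundedUnder_of ⟨⊤, fun n => le_top⟩)
    exact EReal.coe_le_coe_iff.2 (isConv_bdd hbdd (hR1conv n) ω)
  · filter_upwards [hae] with ω hsum
    have hps : Tendsto (fun n => ∑ k ∈ Finset.range n, D k ω) atTop
        (nhds (∑' k, D k ω)) := hsum.hasSum.tendsto_sum_nat
    have htel : ∀ n, ∑ k ∈ Finset.range n, D k ω = phi c (S n ω) - phi c (S 0 ω) :=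
      fun n => Finset.sum_range_sub (fun k => phi c (S k ω)) n
    have hphiTend : Tendsto (fun n => phi c (S n ω)) atTop
        (nhds (∑' k, D k ω + phi c (S 0 ω))) := by
      have h := hps.add_const (phi c (S 0 ω))
      refine h.congr fun n => ?_
      rw [htel n]; ring
    have hphiR1 : Tendsto (fun n => phi c (R1 n ω)) atTop
        (nhds (∑' k, D k ω + phi c (S 0 ω))) := hphiTend.comp hKtend
    obtain ⟨y, hy1, hy2⟩ :=
      exists_ereal_limit (x := fun n => R1 n ω)
        (fun n => isConv_bdd hbdd (hR1conv n) ω) hphiR1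
    have hls : Rstar ω = y := hy2.limsup_eq
    rw [hls]
    exact hy2
end

section
/- Let U: ℝ → ℝ ∪ {-∞} be increasing and concave, finite exactly on a set containing (0,∞) and equal to -∞ on (-∞,0). Let B be a random variable with |B| ≤ b a.s., and fix x > x₁ and a random variable R^B with x₁ + R^B ≥ B a.s. and |R^B| ≤ m₀ a.s. Then the functional I(G) := E[U(x + G - B)] on L^∞(P) is finite at R^B and continuous at R^B in the L^∞ norm topology. -/
open MeasureTheory

/-- Positive part of an extended real, as an extended nonnegative real. -/
noncomputable def EReal.posPart' (a : EReal) : ENNReal :=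
  if a = ⊤ then ⊤ else ENNReal.ofReal a.toReal

/-- Expectation of an `ℝ ∪ {±∞}`-valued random variable, as difference of the lower
integrals of its positive and negative parts. -/
noncomputable def eExp {Ω : Type*} [MeasurableSpace Ω] (P : Measure Ω) (g : Ω → EReal) : EReal :=
  ((∫⁻ ω, (g ω).posPart' ∂P : ENNReal) : EReal) - ((∫⁻ ω, (-(g ω)).posPart' ∂P : ENNReal) : EReal)

lemma ennreal_coe_sub_coe (p q : ENNReal) (hp : p ≠ ⊤) (hq : q ≠ ⊤) :
    (p : EReal) - q = ((p.toReal - q.toReal : ℝ) : EReal) := by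
  lift p to NNReal using hp
  lift q to NNReal using hq
  norm_cast

/-- If `g` is a.e. equal to the coercion of an integrable real function `f`,
then `eExp P g = ∫ f`. -/
lemma eExp_eq_integral {Ω : Type*} [MeasurableSpace Ω] (P : Measure Ω)
    (g : Ω → EReal) (f : Ω → ℝ) (hint : Integrable f P)
    (heq : ∀ᵐ ω ∂P, g ω = (f ω : EReal)) :
    eExp P g = ((∫ ω, f ω ∂P : ℝ) : EReal) := by
  have hpos : (∫⁻ ω, (g ω).posPart' ∂P) = ∫⁻ ω, ENNReal.ofReal (f ω) ∂P := by
    refine lintegral_congr_ae ?_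
    filter_upwards [heq] with ω h
    rw [h, EReal.posPart']
    simp
  have hneg : (∫⁻ ω, (-(g ω)).posPart' ∂P) = ∫⁻ ω, ENNReal.ofReal (-(f ω)) ∂P := by
    refine lintegral_congr_ae ?_
    filter_upwards [heq] with ω h
    rw [h, ← EReal.coe_neg, EReal.posPart']
    simp
  have hfin1 : (∫⁻ ω, ENNReal.ofReal (f ω) ∂P) ≠ ⊤ := by
    refine ne_top_of_le_ne_top hint.2.ne (lintegral_mono fun ω => ?_)
    rw [Real.enorm_eq_ofReal_abs]
    exact ENNReal.ofReal_le_ofReal (le_abs_self _)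
  have hfin2 : (∫⁻ ω, ENNReal.ofReal (-(f ω)) ∂P) ≠ ⊤ := by
    refine ne_top_of_le_ne_top hint.2.ne (lintegral_mono fun ω => ?_)
    rw [Real.enorm_eq_ofReal_abs]
    exact ENNReal.ofReal_le_ofReal (neg_le_abs _)
  rw [eExp, hpos, hneg, ennreal_coe_sub_coe _ _ hfin1 hfin2,
    ← integral_eq_lintegral_pos_part_sub_lintegral_neg_part hint]

/-- Let `U : ℝ → ℝ ∪ {-∞}` be increasing and concave, finite on `(0,∞)` and `-∞` on
`(-∞,0)`.  Let `|B| ≤ b` a.s., fix `x > x₁` and `R^B` with `x₁ + R^B ≥ B` a.s. and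
`|R^B| ≤ m₀` a.s.  Then the functional `I(G) := E[U(x + G - B)]` on `L^∞(P)` is finite at
`R^B` and continuous at `R^B` in the `L^∞`-norm topology (sequential form). -/
theorem utility_functional_finite_and_continuous
    {Ω : Type*} [MeasurableSpace Ω] (P : Measure Ω) [IsProbabilityMeasure P]
    (U : ℝ → EReal) (hmono : Monotone U)
    (hconc : ∀ a b t : ℝ, 0 ≤ t → t ≤ 1 →
      (t : EReal) * U a + ((1 - t : ℝ) : EReal) * U b ≤ U (t * a + (1 - t) * b))
    (hfin : ∀ z : ℝ, 0 < z → U z ≠ ⊥) (hTop : ∀ z : ℝ, U z ≠ ⊤)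
    (hbot : ∀ z : ℝ, z < 0 → U z = ⊥)
    (B : Ω → ℝ) (hBmeas : Measurable B) (b : ℝ) (hB : ∀ᵐ ω ∂P, |B ω| ≤ b)
    (x₁ x : ℝ) (hx : x₁ < x)
    (RB : Ω → ℝ) (hRBmeas : Measurable RB)
    (hsuper : ∀ᵐ ω ∂P, B ω ≤ x₁ + RB ω)
    (m₀ : ℝ) (hRBbdd : ∀ᵐ ω ∂P, |RB ω| ≤ m₀) :
    (eExp P (fun ω => U (x + RB ω - B ω)) ≠ ⊥ ∧
     eExp P (fun ω => U (x + RB ω - B ω)) ≠ ⊤) ∧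
    (∀ (G : ℕ → Ω → ℝ) (c : ℕ → ℝ), (∀ n, Measurable (G n)) →
      (∀ n, ∀ᵐ ω ∂P, |G n ω - RB ω| ≤ c n) →
      Filter.Tendsto c Filter.atTop (nhds 0) →
      Filter.Tendsto (fun n => eExp P (fun ω => U (x + G n ω - B ω)))
        Filter.atTop (nhds (eExp P (fun ω => U (x + RB ω - B ω))))) := by
  -- the real-valued version of `U`
  set u : ℝ → ℝ := fun z => (U z).toReal with hu
  have hUmeas : Measurable U := hmono.measurable
  have humeas : Measurable u := measurable_ereal_toReal.comp hUmeas
  -- `U` coincides with `↑u` on positives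
  have hUu : ∀ z : ℝ, 0 < z → U z = ((u z : ℝ) : EReal) := fun z hz =>
    (EReal.coe_toReal (hTop z) (hfin z hz)).symm
  -- `u` is monotone on positives
  have humono : ∀ s t : ℝ, 0 < s → s ≤ t → u s ≤ u t := fun s t hs hst =>
    EReal.toReal_le_toReal (hmono hst) (hfin s hs) (hTop t)
  -- `u` is concave on `(0,∞)`
  have hconcave : ConcaveOn ℝ (Set.Ioi 0) u := by
    refine ⟨convex_Ioi 0, fun p hp q hq ta tb hta htb htab => ?_⟩
    have hp' : (0:ℝ) < p := hp
    have hq' : (0:ℝ) < q := hq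
    have htb' : tb = 1 - ta := by linarith
    have hcomb : 0 < ta * p + tb * q := by
      rcases eq_or_lt_of_le hta with h | h
      · have : tb = 1 := by linarith
        simp [← h, this, hq']
      · have h1 : 0 < ta * p := mul_pos h hp'
        have h2 : 0 ≤ tb * q := mul_nonneg htb hq'.le
        linarith
    have := hconc p q ta hta (by linarith)
    rw [htb'] at *
    rw [hUu p hp', hUu q hq', hUu _ hcomb] at this
    have h2 : (((ta * u p + (1 - ta) * u q : ℝ)) : EReal) ≤ ((u (ta * p + (1 - ta) * q) : ℝ) : EReal) := by
      push_cast at this ⊢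
      convert this using 2
    have := EReal.coe_le_coe_iff.mp h2
    simpa [smul_eq_mul] using this
  have hcont : ContinuousOn u (Set.Ioi 0) := hconcave.continuousOn isOpen_Ioi
  have hxx : (0:ℝ) < x - x₁ := by linarith
  set ε₀ : ℝ := (x - x₁) / 2 with hε₀
  have hε₀pos : 0 < ε₀ := by positivity
  -- the limit function
  set f : Ω → ℝ := fun ω => u (x + RB ω - B ω) with hf
  have hfmeas : Measurable f := humeas.comp ((measurable_const.add hRBmeas).sub hBmeas)
  -- a.e. bounds for the argument at `RB`
  have hargRB : ∀ᵐ ω ∂P, x - x₁ ≤ x + RB ω - B ω ∧ x + RB ω - B ω ≤ x + m₀ + b := by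
    filter_upwards [hsuper, hRBbdd, hB] with ω h1 h2 h3
    have h2' := abs_le.mp h2
    have h3' := abs_le.mp h3
    exact ⟨by linarith, by linarith⟩
  -- general: bounded argument in `[s, t] ⊆ (0,∞)` gives equality with coercion and bound
  have key : ∀ (s t : ℝ), 0 < s → ∀ (ω : Ω) (z : ℝ), s ≤ z → z ≤ t →
      U z = ((u z : ℝ) : EReal) ∧ |u z| ≤ max |u s| |u t| := by
    intro s t hs ω z h1 h2
    have hz : 0 < z := lt_of_lt_of_le hs h1
    refine ⟨hUu z hz, abs_le.mpr ⟨?_, ?_⟩⟩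
    · have := humono s z hs h1
      have h3 : -|u s| ≤ u s := neg_abs_le _
      have : -(max |u s| |u t|) ≤ -|u s| := neg_le_neg (le_max_left _ _)
      linarith [humono s z hs h1, neg_abs_le (u s)]
    · have := humono z t hz h2
      linarith [le_abs_self (u t), le_max_right |u s| |u t|]
  -- integrability of `f`
  set C₀ : ℝ := max |u (x - x₁)| |u (x + m₀ + b)| with hC₀
  have hfbd : ∀ᵐ ω ∂P, U (x + RB ω - B ω) = ((f ω : ℝ) : EReal) ∧ ‖f ω‖ ≤ C₀ := by
    filter_upwards [hargRB] with ω h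
    have := key (x - x₁) (x + m₀ + b) hxx ω _ h.1 h.2
    exact ⟨this.1, by rw [Real.norm_eq_abs]; exact this.2⟩
  have hfint : Integrable f P := by
    refine (integrable_const C₀).mono' hfmeas.aestronglyMeasurable ?_
    filter_upwards [hfbd] with ω h using h.2
  have heExpRB : eExp P (fun ω => U (x + RB ω - B ω)) = ((∫ ω, f ω ∂P : ℝ) : EReal) :=
    eExp_eq_integral P _ f hfint (by filter_upwards [hfbd] with ω h using h.1)
  refine ⟨by rw [heExpRB]; exact ⟨EReal.coe_ne_bot _, EReal.coe_ne_top _⟩, ?_⟩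
  -- continuity part
  intro G c hGmeas hGc hc0
  set fn : ℕ → Ω → ℝ := fun n ω => u (x + G n ω - B ω) with hfn
  set M : ℝ := x + m₀ + b + ε₀ with hM
  set C₁ : ℝ := max |u ε₀| |u M| with hC₁
  have hev : ∀ᶠ n in Filter.atTop, c n ≤ ε₀ := by
    have := hc0.eventually (gt_mem_nhds hε₀pos)
    filter_upwards [this] with n h using h.le
  -- eventual a.e. bounds on the argument for `G n`
  have hargn : ∀ n : ℕ, c n ≤ ε₀ → ∀ᵐ ω ∂P,
      ε₀ ≤ x + G n ω - B ω ∧ x + G n ω - B ω ≤ M := by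
    intro n hn
    filter_upwards [hGc n, hsuper, hRBbdd, hB] with ω h1 h2 h3 h4
    have h1' := abs_le.mp h1
    have h3' := abs_le.mp h3
    have h4' := abs_le.mp h4
    constructor
    · have : x - x₁ - c n ≤ x + G n ω - B ω := by linarith
      have : x - x₁ - ε₀ ≤ x + G n ω - B ω := by linarith
      rw [hε₀] at this ⊢; linarith
    · rw [hM]; linarith
  -- the eventual coercion identity and bound
  have hfnbd : ∀ᶠ n in Filter.atTop, ∀ᵐ ω ∂P,
      U (x + G n ω - B ω) = ((fn n ω : ℝ) : EReal) ∧ ‖fn n ω‖ ≤ C₁ := by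
    filter_upwards [hev] with n hn
    filter_upwards [hargn n hn] with ω h
    have := key ε₀ M hε₀pos ω _ h.1 h.2
    exact ⟨this.1, by rw [Real.norm_eq_abs]; exact this.2⟩
  -- pointwise a.e. convergence
  have hlim : ∀ᵐ ω ∂P, Filter.Tendsto (fun n => fn n ω) Filter.atTop (nhds (f ω)) := by
    have hae : ∀ᵐ ω ∂P, (∀ n, |G n ω - RB ω| ≤ c n) ∧ x - x₁ ≤ x + RB ω - B ω := by
      filter_upwards [(ae_all_iff).mpr hGc, hargRB] with ω h1 h2 using ⟨h1, h2.1⟩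
    filter_upwards [hae] with ω ⟨h1, h2⟩
    have harg : Filter.Tendsto (fun n => x + G n ω - B ω) Filter.atTop
        (nhds (x + RB ω - B ω)) := by
      have h0 : Filter.Tendsto (fun n => (x + G n ω - B ω) - (x + RB ω - B ω))
          Filter.atTop (nhds 0) := by
        refine squeeze_zero_norm (fun n => ?_) hc0
        rw [Real.norm_eq_abs]
        have heq : (x + G n ω - B ω) - (x + RB ω - B ω) = G n ω - RB ω := by ring
        rw [heq]; exact h1 n
      have h0' := h0.add (tendsto_const_nhds (x := x + RB ω - B ω))
      rw [zero_add] at h0'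
      refine h0'.congr fun n => by ring
    have hmem : x + RB ω - B ω ∈ Set.Ioi (0:ℝ) := by
      simp only [Set.mem_Ioi]; linarith
    have hcontat : ContinuousAt u (x + RB ω - B ω) :=
      hcont.continuousAt (isOpen_Ioi.mem_nhds hmem)
    exact hcontat.tendsto.comp harg
  -- dominated convergence
  have hDCT : Filter.Tendsto (fun n => ∫ ω, fn n ω ∂P) Filter.atTop
      (nhds (∫ ω, f ω ∂P)) := by
    refine tendsto_integral_filter_of_dominated_convergence (fun _ => C₁)
      (Filter.Eventually.of_forall fun n =>
        (humeas.comp ((measurable_const.add (hGmeas n)).sub hBmeas)).aestronglyMeasurable) ?_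
      (integrable_const C₁) hlim
    filter_upwards [hfnbd] with n h
    filter_upwards [h] with ω hω using hω.2
  -- transfer to `eExp`
  have hcoe : Filter.Tendsto (fun n => ((∫ ω, fn n ω ∂P : ℝ) : EReal)) Filter.atTop
      (nhds ((∫ ω, f ω ∂P : ℝ) : EReal)) :=
    (continuous_coe_real_ereal.tendsto _).comp hDCT
  rw [heExpRB]
  refine hcoe.congr' ?_
  filter_upwards [hfnbd] with n h
  exact (eExp_eq_integral P _ (fn n)
    ((integrable_const C₁).mono' (humeas.comp ((measurable_const.add (hGmeas n)).sub hBmeas)).aestronglyMeasurable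
      (by filter_upwards [h] with ω hω using hω.2))
    (by filter_upwards [h] with ω hω using hω.1)).symm
end

section
/- Let u and w be functions with u(x) = w(x) for all x in some interval, and suppose X*, B are random variables and ν* ∈ ba₊(P) with decomposition ν* = ν*_c + ν*_f satisfy: X* - B ≥ 0 a.s., E[U(X* - B)] = u(x), ψ_{ν*}(X* - x) ≤ 0, and w(x) = E[Ũ(dν*_c/dP)] - ψ_{ν*}(B) + x ν*(Ω), where U(z) ≤ Ũ(y) + zy pointwise for the conjugate pair (U, Ũ). Then ψ_{ν*_f}(X* - B) = 0. -/
open MeasureTheory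

/-- Expectation of a real random variable, as an extended real. -/
noncomputable def eExpR {Ω : Type*} [MeasurableSpace Ω] (P : Measure Ω) (g : Ω → ℝ) : EReal :=
  ((∫⁻ ω, ENNReal.ofReal (g ω) ∂P : ENNReal) : EReal) -
    ((∫⁻ ω, ENNReal.ofReal (-(g ω)) ∂P : ENNReal) : EReal)

/-! ### Auxiliary lemmas -/

namespace SingularPartAux

@[simp] lemma posPart'_top : (⊤ : EReal).posPart' = ⊤ := rfl
@[simp] lemma posPart'_bot : (⊥ : EReal).posPart' = 0 := by simp [EReal.posPart']
@[simp] lemma posPart'_coe (r : ℝ) : ((r : EReal)).posPart' = ENNReal.ofReal r := by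
  simp [EReal.posPart', EReal.coe_ne_top]

lemma posPart'_mono {a b : EReal} (h : a ≤ b) : a.posPart' ≤ b.posPart' := by
  induction b with
  | bot => simp [le_bot_iff.1 h]
  | coe rb =>
    induction a with
    | bot => simp
    | coe ra => simp only [posPart'_coe]; exact ENNReal.ofReal_le_ofReal (by exact_mod_cast h)
    | top => simp at h
  | top => simp

lemma ennreal_coe_ereal_eq {x : ENNReal} (hx : x ≠ ⊤) :
    ((x : EReal)) = ((x.toReal : ℝ) : EReal) := by
  lift x to NNReal using hx
  simp [ENNReal.coe_toReal]
  rfl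

lemma ereal_fin_of_add {p q : EReal} (h1 : p + q ≠ ⊥) (h2 : p + q ≠ ⊤) :
    (p ≠ ⊥ ∧ p ≠ ⊤) ∧ (q ≠ ⊥ ∧ q ≠ ⊤) := by
  induction p with
  | bot => simp at h1
  | coe rp =>
    induction q with
    | bot => simp at h1
    | coe rq => simp
    | top => simp at h2
  | top =>
    induction q with
    | bot => simp at h1
    | coe rq => simp at h2
    | top => simp at h2

lemma ereal_add_self_eq {a k : EReal} (ha1 : a ≠ ⊥) (ha2 : a ≠ ⊤) (h : a = a + k) : k = 0 := by
  lift a to ℝ using ⟨ha2, ha1⟩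
  induction k with
  | bot => simp at h
  | coe rk =>
    rw [← EReal.coe_add, EReal.coe_eq_coe_iff] at h
    norm_cast
    linarith
  | top => simp at h

lemma ereal_sub_fin {a m : ENNReal} (h1 : (a:EReal) - (m:EReal) ≠ ⊥)
    (h2 : (a:EReal) - (m:EReal) ≠ ⊤) : a ≠ ⊤ ∧ m ≠ ⊤ := by
  by_cases hm : m = ⊤
  · exfalso
    apply h1
    rw [hm, EReal.coe_ennreal_top, sub_eq_add_neg, EReal.neg_top, EReal.add_bot]
  refine ⟨?_, hm⟩
  intro ha
  apply h2
  rw [ha, EReal.coe_ennreal_top, ennreal_coe_ereal_eq hm, EReal.top_sub_coe]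

lemma ereal_sub_eq_coe {a m : ENNReal} (ha : a ≠ ⊤) (hm : m ≠ ⊤) :
    (a:EReal) - (m:EReal) = ((a.toReal - m.toReal : ℝ) : EReal) := by
  rw [ennreal_coe_ereal_eq ha, ennreal_coe_ereal_eq hm, ← EReal.coe_sub]

lemma ereal_fin_neg {z : EReal} (h1 : -z ≠ ⊥) (h2 : -z ≠ ⊤) : z ≠ ⊥ ∧ z ≠ ⊤ := by
  induction z with
  | bot => simp at h2
  | coe r => simp
  | top => simp at h1

lemma ereal_mul_coe_add {x p : ℝ} {q : EReal} :
    (x : EReal) * ((p : EReal) + q) = ((x * p : ℝ) : EReal) + (x : EReal) * q := by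
  rcases lt_trichotomy x 0 with hx | hx | hx
  · induction q with
    | bot =>
      rw [show ((p:EReal) + ⊥) = ⊥ from EReal.add_bot _, EReal.coe_mul_bot_of_neg hx]
      exact (EReal.coe_add_top _).symm
    | coe r => norm_cast; ring
    | top =>
      rw [show ((p:EReal) + ⊤) = ⊤ from EReal.coe_add_top _, EReal.coe_mul_top_of_neg hx]
      exact (EReal.add_bot _).symm
  · subst hx; simp [EReal.zero_mul]
  · induction q with
    | bot =>
      rw [show ((p:EReal) + ⊥) = ⊥ from EReal.add_bot _, EReal.coe_mul_bot_of_pos hx]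
      exact (EReal.add_bot _).symm
    | coe r => norm_cast; ring
    | top =>
      rw [show ((p:EReal) + ⊤) = ⊤ from EReal.coe_add_top _, EReal.coe_mul_top_of_pos hx]
      exact (EReal.coe_add_top _).symm

lemma ereal_fin_of_mul {x : ℝ} {z : EReal} (hx : x ≠ 0)
    (h1 : (x : EReal) * z ≠ ⊥) (h2 : (x : EReal) * z ≠ ⊤) : z ≠ ⊥ ∧ z ≠ ⊤ := by
  rcases lt_or_gt_of_ne hx with hx' | hx'
  · induction z with
    | bot => exact absurd (EReal.coe_mul_bot_of_neg hx') h2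
    | coe r => simp
    | top => exact absurd (EReal.coe_mul_top_of_neg hx') h1
  · induction z with
    | bot => exact absurd (EReal.coe_mul_bot_of_pos hx') h1
    | coe r => simp
    | top => exact absurd (EReal.coe_mul_top_of_pos hx') h2

lemma pw1 {F G' : EReal} {cr : ℝ} (hle : G' ≤ F + (cr : EReal))
    (hlt : ENNReal.ofReal cr < (-F).posPart') : G'.posPart' = 0 := by
  induction F with
  | bot =>
    rw [show (⊥ : EReal) + (cr : EReal) = ⊥ from EReal.bot_add _] at hle
    rw [le_bot_iff.1 hle]; simp
  | coe r =>
    rw [show -((r : EReal)) = ((-r : ℝ) : EReal) by norm_cast, posPart'_coe] at hlt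
    have hr : cr < -r := by
      by_contra hcon
      exact absurd (ENNReal.ofReal_le_ofReal (not_lt.1 hcon)) (not_le.2 hlt)
    have hG : G' ≤ (((r + cr : ℝ)) : EReal) := by rwa [EReal.coe_add]
    have h0 : G'.posPart' ≤ ENNReal.ofReal (r + cr) := by
      calc G'.posPart' ≤ (((r + cr : ℝ) : EReal)).posPart' := posPart'_mono hG
        _ = ENNReal.ofReal (r + cr) := posPart'_coe _
    rw [ENNReal.ofReal_eq_zero.2 (by linarith)] at h0
    exact le_zero_iff.1 h0
  | top =>
    rw [show -(⊤ : EReal) = ⊥ from rfl, posPart'_bot] at hlt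
    exact absurd hlt (by simp)

lemma pw2 {F G' : EReal} {cr : ℝ} (hle : G' ≤ F + (cr : EReal)) :
    (-F).posPart' ≤ (-G').posPart' + ENNReal.ofReal cr := by
  induction F with
  | bot =>
    rw [show (⊥ : EReal) + (cr : EReal) = ⊥ from EReal.bot_add _] at hle
    rw [le_bot_iff.1 hle]; simp
  | coe r =>
    rw [show -((r : EReal)) = ((-r : ℝ) : EReal) by norm_cast, posPart'_coe]
    induction G' with
    | bot => simp
    | coe s =>
      rw [show -((s : EReal)) = ((-s : ℝ) : EReal) by norm_cast, posPart'_coe]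
      have hs : s ≤ r + cr := by rw [← EReal.coe_add] at hle; exact_mod_cast hle
      calc ENNReal.ofReal (-r) ≤ ENNReal.ofReal (-s + cr) := ENNReal.ofReal_le_ofReal (by linarith)
        _ ≤ ENNReal.ofReal (-s) + ENNReal.ofReal cr := ENNReal.ofReal_add_le
    | top =>
      exfalso
      rw [← EReal.coe_add, top_le_iff] at hle
      exact EReal.coe_ne_top _ hle
  | top => simp

lemma pw3 {F G' : EReal} {cr : ℝ} {A Bp : ENNReal} (hcr : 0 ≤ cr)
    (hle : G' ≤ F + (cr : EReal)) (hA : A ≤ G'.posPart')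
    (hB1 : Bp ≤ (-F).posPart') (hB2 : Bp ≤ ENNReal.ofReal cr) :
    A + Bp ≤ F.posPart' + ENNReal.ofReal cr := by
  induction F with
  | bot =>
    rw [show (⊥ : EReal) + (cr : EReal) = ⊥ from EReal.bot_add _] at hle
    rw [le_bot_iff.1 hle] at hA
    simp only [posPart'_bot, le_zero_iff] at hA
    simp [hA, hB2]
  | coe r =>
    have hA' : A ≤ ENNReal.ofReal (r + cr) := by
      refine hA.trans ?_
      calc G'.posPart' ≤ (((r + cr : ℝ) : EReal)).posPart' := by
            refine posPart'_mono ?_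
            rwa [EReal.coe_add]
        _ = ENNReal.ofReal (r + cr) := posPart'_coe _
    rw [show -((r : EReal)) = ((-r : ℝ) : EReal) by norm_cast, posPart'_coe] at hB1
    rw [posPart'_coe]
    rcases le_or_gt 0 r with hr | hr
    · have hBp0 : Bp = 0 := le_zero_iff.1 (hB1.trans_eq (ENNReal.ofReal_eq_zero.2 (by linarith)))
      rw [hBp0, add_zero]
      exact hA'.trans ((ENNReal.ofReal_add hr hcr).le.trans le_rfl)
    · rw [ENNReal.ofReal_eq_zero.2 hr.le, zero_add]
      rcases le_or_gt (r + cr) 0 with hrc | hrc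
      · have hA0 : A = 0 := le_zero_iff.1 (hA'.trans_eq (ENNReal.ofReal_eq_zero.2 hrc))
        rw [hA0, zero_add]; exact hB2
      · calc A + Bp ≤ ENNReal.ofReal (r + cr) + ENNReal.ofReal (-r) := add_le_add hA' hB1
          _ = ENNReal.ofReal ((r + cr) + (-r)) := (ENNReal.ofReal_add hrc.le (by linarith)).symm
          _ = ENNReal.ofReal cr := by ring_nf
  | top => simp

lemma key {Ω : Type*} [MeasurableSpace Ω] (P : Measure Ω) (f g : Ω → EReal) (c : Ω → ℝ)
    (hc : Measurable c)
    (hae : ∀ᵐ ω ∂P, 0 ≤ c ω ∧ g ω ≤ f ω + ((c ω : ℝ) : EReal)) :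
    (∫⁻ ω, (g ω).posPart' ∂P) + (∫⁻ ω, (-(f ω)).posPart' ∂P) ≤
      (∫⁻ ω, (f ω).posPart' ∂P) + (∫⁻ ω, (-(g ω)).posPart' ∂P) +
        ∫⁻ ω, ENNReal.ofReal (c ω) ∂P := by
  set K := (∫⁻ ω, (f ω).posPart' ∂P) + (∫⁻ ω, (-(g ω)).posPart' ∂P) +
      ∫⁻ ω, ENNReal.ofReal (c ω) ∂P with hK
  rw [MeasureTheory.lintegral_def (μ := P) (f := fun ω => (g ω).posPart'),
    MeasureTheory.lintegral_def (μ := P) (f := fun ω => (-(f ω)).posPart')]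
  refine ENNReal.biSup_add_biSup_le'
    (p := fun φ : SimpleFunc Ω ENNReal => ⇑φ ≤ fun ω => (g ω).posPart')
    (q := fun ψ : SimpleFunc Ω ENNReal => ⇑ψ ≤ fun ω => (-(f ω)).posPart')
    ⟨0, fun ω => zero_le⟩ ⟨0, fun ω => zero_le⟩ ?_
  intro φ hφ ψ hψ
  rw [← SimpleFunc.lintegral_eq_lintegral φ P, ← SimpleFunc.lintegral_eq_lintegral ψ P]
  set G : Set Ω := {ω | ENNReal.ofReal (c ω) < ψ ω} with hGdef
  have hG : MeasurableSet G := measurableSet_lt hc.ennreal_ofReal ψ.measurable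
  have claim1 : ∫⁻ ω in G, φ ω ∂P = 0 := by
    rw [lintegral_eq_zero_iff φ.measurable]
    rw [Filter.EventuallyEq, ae_restrict_iff' hG]
    filter_upwards [hae] with ω hω hωG
    have h0 : (g ω).posPart' = 0 := pw1 hω.2 (hψ ω |>.trans_lt' hωG)
    exact le_zero_iff.1 (h0 ▸ hφ ω)
  have claim2 : ∫⁻ ω in G, ψ ω ∂P ≤
      (∫⁻ ω, (-(g ω)).posPart' ∂P) + ∫⁻ ω in G, ENNReal.ofReal (c ω) ∂P := by
    have step : ∫⁻ ω in G, ψ ω ∂P ≤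
        ∫⁻ ω in G, ((-(g ω)).posPart' + ENNReal.ofReal (c ω)) ∂P := by
      refine lintegral_mono_ae ?_
      filter_upwards [ae_restrict_of_ae hae] with ω hω
      exact (hψ ω).trans (pw2 hω.2)
    rw [lintegral_add_right _ hc.ennreal_ofReal] at step
    exact step.trans (add_le_add_left (setLIntegral_le_lintegral _ _) _)
  have claim3 : ∫⁻ ω in Gᶜ, φ ω ∂P + ∫⁻ ω in Gᶜ, ψ ω ∂P ≤
      (∫⁻ ω, (f ω).posPart' ∂P) + ∫⁻ ω in Gᶜ, ENNReal.ofReal (c ω) ∂P := by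
    rw [← lintegral_add_left φ.measurable]
    have step : ∫⁻ ω in Gᶜ, (φ ω + ψ ω) ∂P ≤
        ∫⁻ ω in Gᶜ, ((f ω).posPart' + ENNReal.ofReal (c ω)) ∂P := by
      refine lintegral_mono_ae ?_
      rw [ae_restrict_iff' hG.compl]
      filter_upwards [hae] with ω hω hωG
      have hψc : ψ ω ≤ ENNReal.ofReal (c ω) := not_lt.1 (by simpa [hGdef] using hωG)
      exact pw3 hω.1 hω.2 (hφ ω) (hψ ω) hψc
    rw [lintegral_add_right _ hc.ennreal_ofReal] at step
    exact step.trans (add_le_add_left (setLIntegral_le_lintegral _ _) _)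
  calc (∫⁻ ω, φ ω ∂P) + ∫⁻ ω, ψ ω ∂P
      = (∫⁻ ω in G, φ ω ∂P + ∫⁻ ω in Gᶜ, φ ω ∂P) +
        (∫⁻ ω in G, ψ ω ∂P + ∫⁻ ω in Gᶜ, ψ ω ∂P) := by
        rw [← lintegral_add_compl (fun ω => φ ω) hG, ← lintegral_add_compl (fun ω => ψ ω) hG]
    _ = (∫⁻ ω in Gᶜ, φ ω ∂P) + (∫⁻ ω in G, ψ ω ∂P + ∫⁻ ω in Gᶜ, ψ ω ∂P) := by
        rw [claim1, zero_add]
    _ ≤ (∫⁻ ω in Gᶜ, φ ω ∂P) + (((∫⁻ ω, (-(g ω)).posPart' ∂P) +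
          ∫⁻ ω in G, ENNReal.ofReal (c ω) ∂P) + ∫⁻ ω in Gᶜ, ψ ω ∂P) :=
        add_le_add_right (add_le_add_left claim2 _) _
    _ = ((∫⁻ ω in Gᶜ, φ ω ∂P) + ∫⁻ ω in Gᶜ, ψ ω ∂P) +
          (∫⁻ ω, (-(g ω)).posPart' ∂P) + ∫⁻ ω in G, ENNReal.ofReal (c ω) ∂P := by ring
    _ ≤ ((∫⁻ ω, (f ω).posPart' ∂P) + ∫⁻ ω in Gᶜ, ENNReal.ofReal (c ω) ∂P) +
          (∫⁻ ω, (-(g ω)).posPart' ∂P) + ∫⁻ ω in G, ENNReal.ofReal (c ω) ∂P := by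
        gcongr
    _ = K := by
        have hcsplit : ∫⁻ ω, ENNReal.ofReal (c ω) ∂P =
            ∫⁻ ω in G, ENNReal.ofReal (c ω) ∂P + ∫⁻ ω in Gᶜ, ENNReal.ofReal (c ω) ∂P :=
          (lintegral_add_compl _ hG).symm
        rw [hK, hcsplit]
        ring

lemma lemL {p n a m C : ENNReal} (hm : m ≠ ⊤) (h : p + m ≤ a + n + C) :
    ((p : EReal) - n) ≤ ((a : EReal) - m) + C := by
  by_cases hn : n = ⊤
  · have hbot : ((p : EReal) - n) = ⊥ := by
      rw [hn, EReal.coe_ennreal_top, sub_eq_add_neg, EReal.neg_top, EReal.add_bot]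
    rw [hbot]; exact bot_le
  by_cases ha : a = ⊤
  · have htop : ((a : EReal) - m) = ⊤ := by
      rw [ha, EReal.coe_ennreal_top, ennreal_coe_ereal_eq hm, sub_eq_add_neg, ← EReal.coe_neg,
        EReal.top_add_coe]
    rw [htop, EReal.top_add_of_ne_bot (by simp)]
    exact le_top
  have ham : ((a : EReal) - m) = (((a.toReal - m.toReal : ℝ)) : EReal) := by
    rw [ennreal_coe_ereal_eq hm, ennreal_coe_ereal_eq ha, ← EReal.coe_sub]
  by_cases hC : C = ⊤
  · rw [hC, EReal.coe_ennreal_top, EReal.add_top_of_ne_bot (by rw [ham]; exact EReal.coe_ne_bot _)]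
    exact le_top
  have hp : p ≠ ⊤ := by
    intro hp
    rw [hp] at h
    have hPtop : a + n + C = ⊤ := top_le_iff.mp (le_trans (by simp) h)
    exact (by simp [ENNReal.add_eq_top, ha, hn, hC] at hPtop)
  rw [ham, ennreal_coe_ereal_eq hp, ennreal_coe_ereal_eq hn, ennreal_coe_ereal_eq hC,
    ← EReal.coe_sub, ← EReal.coe_add, EReal.coe_le_coe_iff]
  have h' : p.toReal + m.toReal ≤ a.toReal + n.toReal + C.toReal := by
    have hmono := ENNReal.toReal_mono (by simp [ENNReal.add_eq_top, ha, hn, hC]) h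
    rw [ENNReal.toReal_add hp hm, ENNReal.toReal_add (by simp [ENNReal.add_eq_top, ha, hn]) hC,
      ENNReal.toReal_add ha hn] at hmono
    exact hmono
  linarith

variable {Ω : Type*} [MeasurableSpace Ω] {P : Measure Ω}

lemma lint_pos_ne_top {φ : Ω → ℝ} (hφ : Integrable φ P) : ∫⁻ ω, ENNReal.ofReal (φ ω) ∂P ≠ ⊤ := by
  have h := hφ.2
  rw [HasFiniteIntegral] at h
  refine ne_of_lt (lt_of_le_of_lt (lintegral_mono fun ω => ?_) h)
  rw [Real.enorm_eq_ofReal_abs]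
  exact ENNReal.ofReal_le_ofReal (le_abs_self _)

lemma lint_neg_ne_top {φ : Ω → ℝ} (hφ : Integrable φ P) : ∫⁻ ω, ENNReal.ofReal (-(φ ω)) ∂P ≠ ⊤ :=
  lint_pos_ne_top hφ.neg

/-- eExpR of an integrable function equals the Bochner integral. -/
lemma eExpR_integrable {φ : Ω → ℝ} (hφ : Integrable φ P) :
    eExpR P φ = ((∫ ω, φ ω ∂P : ℝ) : EReal) := by
  rw [eExpR, integral_eq_lintegral_pos_part_sub_lintegral_neg_part hφ,
    ennreal_coe_ereal_eq (lint_pos_ne_top hφ), ennreal_coe_ereal_eq (lint_neg_ne_top hφ),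
    ← EReal.coe_sub]

/-- integrability from finiteness of the two one-sided lintegrals. -/
lemma integrable_of_lint {φ : Ω → ℝ} (hm : Measurable φ)
    (h1 : ∫⁻ ω, ENNReal.ofReal (φ ω) ∂P ≠ ⊤) (h2 : ∫⁻ ω, ENNReal.ofReal (-(φ ω)) ∂P ≠ ⊤) :
    Integrable φ P := by
  refine ⟨hm.aestronglyMeasurable, ?_⟩
  rw [HasFiniteIntegral]
  have habs : ∀ ω, ‖φ ω‖ₑ = ENNReal.ofReal (φ ω) + ENNReal.ofReal (-(φ ω)) := by
    intro ω
    rw [Real.enorm_eq_ofReal_abs]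
    rcases le_or_gt 0 (φ ω) with h | h
    · rw [abs_of_nonneg h,
        show ENNReal.ofReal (-(φ ω)) = 0 from ENNReal.ofReal_eq_zero.2 (by linarith), add_zero]
    · rw [abs_of_neg h,
        show ENNReal.ofReal (φ ω) = 0 from ENNReal.ofReal_eq_zero.2 (by linarith), zero_add]
  simp_rw [habs]
  rw [lintegral_add_left hm.ennreal_ofReal]
  exact lt_top_iff_ne_top.2 (ENNReal.add_ne_top.2 ⟨h1, h2⟩)

lemma eExpR_add_split {f g : Ω → ℝ} (hfm : Measurable f) (hf0 : ∀ᵐ ω ∂P, 0 ≤ f ω)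
    (hg : Integrable g P) :
    eExpR P (fun ω => f ω + g ω) =
      ((∫⁻ ω, ENNReal.ofReal (f ω) ∂P : ENNReal) : EReal) + ((∫ ω, g ω ∂P : ℝ) : EReal) := by
  by_cases hF : ∫⁻ ω, ENNReal.ofReal (f ω) ∂P = ⊤
  · have hpos : ∫⁻ ω, ENNReal.ofReal (f ω + g ω) ∂P = ⊤ := by
      by_contra hne
      have hle : ∫⁻ ω, ENNReal.ofReal (f ω) ∂P ≤
          ∫⁻ ω, (ENNReal.ofReal (f ω + g ω) + ENNReal.ofReal (-(g ω))) ∂P := by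
        refine lintegral_mono fun ω => ?_
        calc ENNReal.ofReal (f ω) = ENNReal.ofReal ((f ω + g ω) + (-(g ω))) := by ring_nf
          _ ≤ _ := ENNReal.ofReal_add_le
      rw [lintegral_add_right' _ (g := fun ω => ENNReal.ofReal (-(g ω)))
        hg.aemeasurable.neg.ennreal_ofReal] at hle
      rw [hF, top_le_iff] at hle
      exact absurd (ENNReal.add_eq_top.1 hle) (by
        rintro (h | h)
        · exact hne h
        · exact lint_neg_ne_top hg h)
    have hneg : ∫⁻ ω, ENNReal.ofReal (-(f ω + g ω)) ∂P ≠ ⊤ := by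
      refine ne_top_of_le_ne_top (lint_neg_ne_top hg) (lintegral_mono_ae ?_)
      filter_upwards [hf0] with ω h0
      exact ENNReal.ofReal_le_ofReal (by linarith)
    rw [eExpR, hpos, EReal.coe_ennreal_top, ennreal_coe_ereal_eq hneg, EReal.top_sub_coe,
      hF, EReal.coe_ennreal_top, EReal.top_add_coe]
  · have hfint : Integrable f P := by
      refine ⟨hfm.aestronglyMeasurable, ?_⟩
      rw [hasFiniteIntegral_iff_ofReal hf0]
      exact lt_top_iff_ne_top.2 hF
    have heq : eExpR P (f + g) = ((∫ ω, (f + g) ω ∂P : ℝ) : EReal) :=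
      eExpR_integrable (hfint.add hg)
    rw [show (fun ω => f ω + g ω) = (fun ω => (f + g) ω) from rfl, heq]
    have hint : ∫ ω, (f + g) ω ∂P = ∫ ω, f ω ∂P + ∫ ω, g ω ∂P := by
      simp only [Pi.add_apply]
      exact integral_add hfint hg
    rw [hint, ennreal_coe_ereal_eq hF]
    have hlr : (∫⁻ ω, ENNReal.ofReal (f ω) ∂P).toReal = ∫ ω, f ω ∂P := by
      rw [integral_eq_lintegral_of_nonneg_ae hf0 hfm.aestronglyMeasurable]
    rw [hlr, ← EReal.coe_add]

lemma psi_const_le (ψf : (Ω → ℝ) → EReal)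
    (hadd : ∀ g₁ g₂ : Ω → ℝ, ψf (g₁ + g₂) = ψf g₁ + ψf g₂)
    (hpos : ∀ g : Ω → ℝ, (∀ᵐ ω ∂P, 0 ≤ g ω) → 0 ≤ ψf g)
    (hzero : ψf (fun _ => (0:ℝ)) = 0)
    {aψ : ℝ} (ha : ψf (fun _ => (1:ℝ)) = (aψ : EReal)) (x : ℝ) :
    ψf (fun _ => x) ≤ ((x * aψ : ℝ) : EReal) := by
  have hconst_pos : ∀ y : ℝ, 0 ≤ y → 0 ≤ ψf (fun _ => y) := fun y hy =>
    hpos _ (Filter.Eventually.of_forall fun ω => hy)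
  have hmono : ∀ (y z : ℝ), y ≤ z → ψf (fun _ => y) ≤ ψf (fun _ => z) := by
    intro y z hyz
    have hfe : (fun _ : Ω => z) = (fun _ : Ω => y) + (fun _ : Ω => z - y) := by
      funext ω; simp
    rw [hfe, hadd]
    exact le_add_of_nonneg_right (hconst_pos _ (by linarith))
  have haψ : 0 ≤ aψ := by
    have h0 := hconst_pos 1 zero_le_one
    rw [ha] at h0
    exact_mod_cast h0
  have hscale : ∀ (y dr : ℝ), ψf (fun _ => y) = (dr : EReal) →
      ∀ n : ℕ, ψf (fun _ => (n : ℝ) * y) = (((n : ℝ) * dr : ℝ) : EReal) := by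
    intro y dr hy n
    induction n with
    | zero => simpa using hzero
    | succ k ih =>
      have hfe : (fun _ : Ω => ((k+1 : ℕ) : ℝ) * y) =
          (fun _ : Ω => (k:ℝ) * y) + (fun _ : Ω => y) := by
        funext ω; show ((k+1 : ℕ) : ℝ) * y = (k:ℝ) * y + y; push_cast; ring
      rw [hfe, hadd, ih, hy, ← EReal.coe_add, EReal.coe_eq_coe_iff]
      push_cast; ring
  have hnat : ∀ n : ℕ, ψf (fun _ => (n : ℝ)) = (((n:ℝ) * aψ : ℝ) : EReal) := by
    intro n
    have h1 := hscale 1 aψ ha n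
    simpa using h1
  have hupper : ∀ y : ℝ, 0 < y → ψf (fun _ => y) ≤ ((y * aψ : ℝ) : EReal) := by
    intro y hy
    have hnetop : ψf (fun _ => y) ≠ ⊤ := by
      have h1 : ψf (fun _ => y) ≤ ψf (fun _ => ((⌈y⌉₊ : ℝ))) := hmono _ _ (Nat.le_ceil y)
      rw [hnat] at h1
      intro hcon; rw [hcon, top_le_iff] at h1
      exact EReal.coe_ne_top _ h1
    have hnebot : ψf (fun _ => y) ≠ ⊥ := by
      intro hcon
      have h0 := hconst_pos y hy.le
      rw [hcon] at h0
      simp at h0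
    set dr := (ψf (fun _ => y)).toReal with hdrdef
    have hdr : ψf (fun _ => y) = (dr : EReal) := (EReal.coe_toReal hnetop hnebot).symm
    have harch : ∀ n : ℕ, (n:ℝ) * dr ≤ ((n:ℝ) * y + 1) * aψ := by
      intro n
      have h1 : ψf (fun _ => (n:ℝ) * y) ≤ ψf (fun _ => ((⌈(n:ℝ)*y⌉₊ : ℝ))) :=
        hmono _ _ (Nat.le_ceil _)
      rw [hscale y dr hdr n, hnat, EReal.coe_le_coe_iff] at h1
      have h3 : ((⌈(n:ℝ)*y⌉₊ : ℝ)) ≤ (n:ℝ)*y + 1 := (Nat.ceil_lt_add_one (by positivity)).le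
      nlinarith
    rw [hdr, EReal.coe_le_coe_iff]
    by_contra hcon
    push_neg at hcon
    have hδ : 0 < dr - y*aψ := by linarith
    obtain ⟨n, hn⟩ := exists_nat_gt (aψ / (dr - y*aψ))
    have h4 := harch n
    have h5 : aψ < (n:ℝ) * (dr - y*aψ) := by
      rw [div_lt_iff₀ hδ] at hn
      linarith [hn]
    nlinarith
  have hlower : ∀ y : ℝ, 0 < y → ((y * aψ : ℝ) : EReal) ≤ ψf (fun _ => y) := by
    intro y hy
    by_cases hnetop : ψf (fun _ => y) = ⊤
    · rw [hnetop]; exact le_top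
    have hnebot : ψf (fun _ => y) ≠ ⊥ := by
      intro hcon
      have h0 := hconst_pos y hy.le
      rw [hcon] at h0
      simp at h0
    set dr := (ψf (fun _ => y)).toReal with hdrdef
    have hdr : ψf (fun _ => y) = (dr : EReal) := (EReal.coe_toReal hnetop hnebot).symm
    have harch : ∀ n : ℕ, ((n:ℝ) * y - 1) * aψ ≤ (n:ℝ) * dr := by
      intro n
      have h1 : ψf (fun _ => ((⌊(n:ℝ)*y⌋₊ : ℝ))) ≤ ψf (fun _ => (n:ℝ) * y) :=
        hmono _ _ (Nat.floor_le (by positivity))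
      rw [hscale y dr hdr n, hnat, EReal.coe_le_coe_iff] at h1
      have h3 : (n:ℝ)*y - 1 ≤ ((⌊(n:ℝ)*y⌋₊ : ℝ)) := by
        have hfl := Nat.sub_one_lt_floor ((n:ℝ)*y)
        linarith
      nlinarith
    rw [hdr, EReal.coe_le_coe_iff]
    by_contra hcon
    push_neg at hcon
    have hδ : 0 < y*aψ - dr := by linarith
    obtain ⟨n, hn⟩ := exists_nat_gt (aψ / (y*aψ - dr))
    have h4 := harch n
    have h5 : aψ < (n:ℝ) * (y*aψ - dr) := by
      rw [div_lt_iff₀ hδ] at hn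
      linarith [hn]
    nlinarith
  rcases lt_trichotomy x 0 with hx | hx | hx
  · have hsum : ψf (fun _ => x) + ψf (fun _ => -x) = 0 := by
      rw [← hadd]
      have hfe : (fun _ : Ω => x) + (fun _ : Ω => -x) = (fun _ : Ω => (0:ℝ)) := by
        funext ω; simp
      rw [hfe, hzero]
    have hlow := hlower (-x) (by linarith)
    by_cases hD : ψf (fun _ => x) = ⊥
    · rw [hD]; exact bot_le
    have hDtop : ψf (fun _ => x) ≠ ⊤ := by
      intro hcon
      rw [hcon] at hsum
      rcases eq_or_ne (ψf (fun _ => -x)) ⊥ with hE | hE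
      · rw [hE] at hsum; simp at hsum
      · rw [EReal.top_add_of_ne_bot hE] at hsum; simp at hsum
    have hEtop : ψf (fun _ => -x) ≠ ⊤ := by
      intro hcon
      rw [hcon, EReal.add_top_of_ne_bot hD] at hsum
      simp at hsum
    have hEbot : ψf (fun _ => -x) ≠ ⊥ := by
      intro hcon
      have h0 := hconst_pos (-x) (by linarith)
      rw [hcon] at h0; simp at h0
    set D := (ψf (fun _ => x)).toReal
    set E := (ψf (fun _ => -x)).toReal
    have hDeq : ψf (fun _ => x) = (D : EReal) := (EReal.coe_toReal hDtop hD).symm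
    have hEeq : ψf (fun _ => -x) = (E : EReal) := (EReal.coe_toReal hEtop hEbot).symm
    rw [hDeq, hEeq, ← EReal.coe_add, show ((0:EReal)) = ((0:ℝ):EReal) from rfl,
      EReal.coe_eq_coe_iff] at hsum
    rw [hEeq, EReal.coe_le_coe_iff] at hlow
    rw [hDeq, EReal.coe_le_coe_iff]
    nlinarith
  · subst hx
    rw [hzero]
    norm_num
  · exact hupper x hx

end SingularPartAux


open SingularPartAux

/-- Vanishing of the singular part on the optimal wealth.  Here `ν* ∈ ba₊(P)` is represented
by the density `h = dν*_c/dP` of its countably additive part and by the (positive, additive)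
integration functional `ψf = ψ_{ν*_f}` of its purely finitely additive part, extended to
random variables bounded below; `ψ_{ν*}(g) = E[h g] + ψf(g)` and `ν*(Ω) = E[h] + ψf(1)`.
If `X* - B ≥ 0` a.s., `E[U(X* - B)] = u(x)`, `ψ_{ν*}(X* - x) ≤ 0`,
`w(x) = E[Ũ(dν*_c/dP)] - ψ_{ν*}(B) + x ν*(Ω)`, the pointwise Fenchel inequality
`U(z) ≤ Ũ(y) + zy` holds, and `u(x) = w(x)`, then `ψ_{ν*_f}(X* - B) = 0`. -/
theorem singular_part_vanishes_on_optimal_wealth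
    {Ω : Type*} [MeasurableSpace Ω] (P : Measure Ω) [IsProbabilityMeasure P]
    (U tU : ℝ → EReal) (u w : ℝ → EReal) (x : ℝ)
    (Xs B h : Ω → ℝ) (hXs : Measurable Xs) (hBmeas : Measurable B) (hhmeas : Measurable h)
    (hh : ∀ ω, 0 ≤ h ω) (hhint : Integrable h P)
    (ψf : (Ω → ℝ) → EReal)
    (hψf_pos : ∀ g : Ω → ℝ, (∀ᵐ ω ∂P, 0 ≤ g ω) → 0 ≤ ψf g)
    (hψf_add : ∀ g₁ g₂ : Ω → ℝ, ψf (g₁ + g₂) = ψf g₁ + ψf g₂)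
    (hXB : ∀ᵐ ω ∂P, 0 ≤ Xs ω - B ω)
    (hFen : ∀ z y : ℝ, 0 ≤ z → 0 ≤ y → U z ≤ tU y + ((z * y : ℝ) : EReal))
    (hEU : eExp P (fun ω => U (Xs ω - B ω)) = u x)
    (hbudget : eExpR P (fun ω => h ω * (Xs ω - x)) + ψf (fun ω => Xs ω - x) ≤ 0)
    (hw : w x = eExp P (fun ω => tU (h ω)) -
        (eExpR P (fun ω => h ω * B ω) + ψf B) +
        ((x : ℝ) : EReal) * (eExpR P h + ψf (fun _ => 1)))
    (huw : u x = w x)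
    (hufin : u x ≠ ⊥ ∧ u x ≠ ⊤) :
    ψf (fun ω => Xs ω - B ω) = 0 := by
  classical
  obtain ⟨hu1, hu2⟩ := hufin
  have hwfin1 : w x ≠ ⊥ := by rw [← huw]; exact hu1
  have hwfin2 : w x ≠ ⊤ := by rw [← huw]; exact hu2
  -- finiteness of the parts of w x
  obtain ⟨hQfin, hRfin⟩ := ereal_fin_of_add (hw ▸ hwfin1) (hw ▸ hwfin2)
  rw [sub_eq_add_neg] at hQfin
  obtain ⟨hTfin, hnegfin⟩ := ereal_fin_of_add hQfin.1 hQfin.2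
  obtain ⟨hβψB1, hβψB2⟩ := ereal_fin_neg hnegfin.1 hnegfin.2
  obtain ⟨hβfin, hψBfin⟩ := ereal_fin_of_add hβψB1 hβψB2
  -- T is a real number
  have hTdef : eExp P (fun ω => tU (h ω)) =
      ((∫⁻ ω, (tU (h ω)).posPart' ∂P : ENNReal) : EReal) -
        ((∫⁻ ω, (-(tU (h ω))).posPart' ∂P : ENNReal) : EReal) := rfl
  obtain ⟨hafne, hmfne⟩ := ereal_sub_fin (hTdef ▸ hTfin.1) (hTdef ▸ hTfin.2)
  set tR : ℝ := (∫⁻ ω, (tU (h ω)).posPart' ∂P).toReal -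
      (∫⁻ ω, (-(tU (h ω))).posPart' ∂P).toReal with htRdef
  have hTco : eExp P (fun ω => tU (h ω)) = (tR : EReal) := by
    rw [hTdef, ereal_sub_eq_coe hafne hmfne]
  -- integrability of h * B
  have hβdef : eExpR P (fun ω => h ω * B ω) =
      ((∫⁻ ω, ENNReal.ofReal (h ω * B ω) ∂P : ENNReal) : EReal) -
        ((∫⁻ ω, ENNReal.ofReal (-(h ω * B ω)) ∂P : ENNReal) : EReal) := rfl
  obtain ⟨hA1, hA2⟩ := ereal_sub_fin (hβdef ▸ hβfin.1) (hβdef ▸ hβfin.2)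
  have hBh : Integrable (fun ω => h ω * B ω) P :=
    integrable_of_lint (hhmeas.mul hBmeas) hA1 hA2
  set βr : ℝ := ∫ ω, h ω * B ω ∂P with hβrdef
  have hβco : eExpR P (fun ω => h ω * B ω) = (βr : EReal) := eExpR_integrable hBh
  set ihr : ℝ := ∫ ω, h ω ∂P with hihrdef
  have hihco : eExpR P h = (ihr : EReal) := eExpR_integrable hhint
  -- ψf B is a real number
  set b2 : ℝ := (ψf B).toReal with hb2def
  have hb2co : ψf B = (b2 : EReal) := (EReal.coe_toReal hψBfin.2 hψBfin.1).symm
  -- ψf 0 = 0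
  have hzero : ψf (fun _ => (0:ℝ)) = 0 := by
    have hBsplit : ψf B = ψf B + ψf (fun _ => (0:ℝ)) := by
      conv_lhs => rw [show B = B + (fun _ : Ω => (0:ℝ)) by funext ω; simp]
      rw [hψf_add]
    exact ereal_add_self_eq hψBfin.1 hψBfin.2 hBsplit
  -- s
  have hs0 : 0 ≤ ψf (fun ω => Xs ω - B ω) := hψf_pos _ hXB
  -- split of the budget constraint
  have hfun2 : (fun ω => Xs ω - x) = (fun ω => Xs ω - B ω) + (fun ω => B ω - x) := by
    funext ω; show Xs ω - x = (Xs ω - B ω) + (B ω - x); ring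
  have hψsplit : ψf (fun ω => Xs ω - x) =
      ψf (fun ω => Xs ω - B ω) + ψf (fun ω => B ω - x) := by
    rw [hfun2, hψf_add]
  have hBe : ψf B = ψf (fun ω => B ω - x) + ψf (fun _ => x) := by
    conv_lhs => rw [show B = (fun ω => B ω - x) + (fun _ : Ω => x) by
      funext ω; show B ω = (B ω - x) + x; ring]
    rw [hψf_add]
  obtain ⟨hefin, hDfin⟩ := ereal_fin_of_add
    (p := ψf (fun ω => B ω - x)) (q := ψf (fun _ => x))
    (by rw [← hBe, hb2co]; simp) (by rw [← hBe, hb2co]; simp)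
  set er : ℝ := (ψf (fun ω => B ω - x)).toReal with herdef
  have heco : ψf (fun ω => B ω - x) = (er : EReal) := (EReal.coe_toReal hefin.2 hefin.1).symm
  set Dr : ℝ := (ψf (fun _ => x)).toReal with hDrdef
  have hDco : ψf (fun _ => x) = (Dr : EReal) := (EReal.coe_toReal hDfin.2 hDfin.1).symm
  have hb2split : b2 = er + Dr := by
    have := hBe
    rw [hb2co, heco, hDco, ← EReal.coe_add, EReal.coe_eq_coe_iff] at this
    exact this
  -- split of the eExpR part of the budget
  have hfun1 : (fun ω => h ω * (Xs ω - x)) =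
      fun ω => (h ω * (Xs ω - B ω)) + (h ω * B ω - x * h ω) := by
    funext ω; ring
  have hcmeas : Measurable (fun ω => h ω * (Xs ω - B ω)) := hhmeas.mul (hXs.sub hBmeas)
  have hc0 : ∀ᵐ ω ∂P, 0 ≤ h ω * (Xs ω - B ω) := by
    filter_upwards [hXB] with ω h0
    exact mul_nonneg (hh ω) h0
  have hsplitE : eExpR P (fun ω => h ω * (Xs ω - x)) =
      ((∫⁻ ω, ENNReal.ofReal (h ω * (Xs ω - B ω)) ∂P : ENNReal) : EReal) +
        ((∫ ω, (h ω * B ω - x * h ω) ∂P : ℝ) : EReal) := by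
    rw [hfun1]
    exact eExpR_add_split hcmeas hc0 (hBh.sub (hhint.const_mul x))
  have hgr : ∫ ω, (h ω * B ω - x * h ω) ∂P = βr - x * ihr := by
    rw [integral_sub hBh (hhint.const_mul x), integral_const_mul]
  rw [hsplitE, hψsplit, hgr] at hbudget
  set cap := ∫⁻ ω, ENNReal.ofReal (h ω * (Xs ω - B ω)) ∂P with hcapdef
  -- cap and s are finite
  have hsnb : ψf (fun ω => Xs ω - B ω) ≠ ⊥ := by
    intro hcon; rw [hcon] at hs0; simp at hs0
  have hsum_ne_bot : ψf (fun ω => Xs ω - B ω) + ψf (fun ω => B ω - x) ≠ ⊥ := by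
    rw [heco]
    intro hcon
    rcases EReal.add_eq_bot_iff.1 hcon with hcc | hcc
    · exact hsnb hcc
    · exact EReal.coe_ne_bot _ hcc
  have hcapne : cap ≠ ⊤ := by
    intro hcon
    rw [hcon, EReal.coe_ennreal_top, EReal.top_add_coe,
      EReal.top_add_of_ne_bot hsum_ne_bot] at hbudget
    exact absurd (top_le_iff.1 hbudget) (by simp)
  have hsne : ψf (fun ω => Xs ω - B ω) ≠ ⊤ := by
    intro hcon
    rw [heco, hcon, EReal.top_add_coe, EReal.add_top_of_ne_bot (by
      rw [ennreal_coe_ereal_eq hcapne, ← EReal.coe_add]; exact EReal.coe_ne_bot _)] at hbudget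
    exact absurd (top_le_iff.1 hbudget) (by simp)
  set sr : ℝ := (ψf (fun ω => Xs ω - B ω)).toReal with hsrdef
  have hsco : ψf (fun ω => Xs ω - B ω) = (sr : EReal) := (EReal.coe_toReal hsne hsnb).symm
  have hsr0 : 0 ≤ sr := by
    rw [hsco] at hs0; exact_mod_cast hs0
  set capr : ℝ := cap.toReal with hcaprdef
  have hbudgetR : capr + (βr - x * ihr) + (sr + er) ≤ 0 := by
    rw [ennreal_coe_ereal_eq hcapne, hsco, heco, ← EReal.coe_add, ← EReal.coe_add,
      ← EReal.coe_add, show ((0:EReal)) = ((0:ℝ):EReal) from rfl, EReal.coe_le_coe_iff]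
      at hbudget
    exact hbudget
  -- Fenchel inequality via the key lemma
  have hae : ∀ᵐ ω ∂P, 0 ≤ h ω * (Xs ω - B ω) ∧
      U (Xs ω - B ω) ≤ tU (h ω) + ((h ω * (Xs ω - B ω) : ℝ) : EReal) := by
    filter_upwards [hXB] with ω h0
    refine ⟨mul_nonneg (hh ω) h0, ?_⟩
    have hf := hFen (Xs ω - B ω) (h ω) h0 (hh ω)
    rwa [mul_comm] at hf
  have hkey := key P (fun ω => tU (h ω)) (fun ω => U (Xs ω - B ω))
    (fun ω => h ω * (Xs ω - B ω)) hcmeas hae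
  have hL := lemL hmfne hkey
  have hu_le : u x ≤ ((tR + capr : ℝ) : EReal) := by
    rw [← hEU]
    show eExp P (fun ω => U (Xs ω - B ω)) ≤ _
    calc eExp P (fun ω => U (Xs ω - B ω)) ≤
        (((∫⁻ ω, (tU (h ω)).posPart' ∂P : ENNReal) : EReal) -
          ((∫⁻ ω, (-(tU (h ω))).posPart' ∂P : ENNReal) : EReal)) + ((cap : ENNReal) : EReal) := hL
      _ = ((tR + capr : ℝ) : EReal) := by
          rw [ereal_sub_eq_coe hafne hmfne, ennreal_coe_ereal_eq hcapne, ← EReal.coe_add]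
  -- lower bound on w x
  have hRsplit : ((x : ℝ) : EReal) * (eExpR P h + ψf (fun _ => 1)) =
      ((x * ihr : ℝ) : EReal) + ((x:ℝ):EReal) * ψf (fun _ => 1) := by
    rw [hihco, ereal_mul_coe_add]
  have hDle : ψf (fun _ => x) ≤ ((x:ℝ):EReal) * ψf (fun _ => 1) := by
    rcases eq_or_ne x 0 with hx0 | hx0
    · subst hx0
      rw [hzero, show (((0:ℝ)):EReal) = (0:EReal) from rfl, EReal.zero_mul]
    · have hR2fin := (ereal_fin_of_add (p := ((x * ihr : ℝ) : EReal))
        (q := ((x:ℝ):EReal) * ψf (fun _ => 1))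
        (hRsplit ▸ hRfin.1) (hRsplit ▸ hRfin.2)).2
      obtain ⟨hψ1nb, hψ1nt⟩ := ereal_fin_of_mul hx0 hR2fin.1 hR2fin.2
      set aψ : ℝ := (ψf (fun _ => 1)).toReal with haψdef
      have haco : ψf (fun _ => (1:ℝ)) = (aψ : EReal) := (EReal.coe_toReal hψ1nt hψ1nb).symm
      calc ψf (fun _ => x) ≤ ((x * aψ : ℝ) : EReal) :=
            psi_const_le ψf hψf_add hψf_pos hzero haco x
        _ = ((x:ℝ):EReal) * ψf (fun _ => 1) := by rw [haco, EReal.coe_mul]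
  have hwlow : ((tR - (βr + b2) + x * ihr + Dr : ℝ) : EReal) ≤ w x := by
    rw [hw, hTco, hβco, hb2co, hRsplit]
    calc ((tR - (βr + b2) + x * ihr + Dr : ℝ) : EReal)
        = ((tR - (βr + b2) + x * ihr : ℝ) : EReal) + ((Dr : ℝ) : EReal) := by
          rw [← EReal.coe_add]
      _ ≤ ((tR - (βr + b2) + x * ihr : ℝ) : EReal) + ((x:ℝ):EReal) * ψf (fun _ => 1) :=
          add_le_add_right (hDco ▸ hDle) _
      _ = ((tR : EReal) - ((βr : EReal) + (b2 : EReal)) +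
            (((x * ihr : ℝ) : EReal) + ((x:ℝ):EReal) * ψf (fun _ => 1))) := by
          rw [← add_assoc, ← EReal.coe_add, ← EReal.coe_sub, ← EReal.coe_add]
  -- conclusion
  set ur : ℝ := (u x).toReal with hurdef
  have huco : u x = (ur : EReal) := (EReal.coe_toReal hu2 hu1).symm
  have hfinal : ((ur + sr : ℝ) : EReal) ≤ ((ur : ℝ) : EReal) := by
    calc ((ur + sr : ℝ) : EReal) = ((ur : ℝ) : EReal) + ((sr : ℝ) : EReal) := by
          rw [← EReal.coe_add]
      _ ≤ ((tR + capr : ℝ) : EReal) + ((sr : ℝ) : EReal) :=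
          add_le_add_left (huco ▸ hu_le) _
      _ = ((tR + capr + sr : ℝ) : EReal) := by rw [← EReal.coe_add]
      _ ≤ ((tR - (βr + b2) + x * ihr + Dr : ℝ) : EReal) := by
          rw [EReal.coe_le_coe_iff]
          have hb2' : b2 = er + Dr := hb2split
          linarith
      _ ≤ w x := hwlow
      _ = u x := huw.symm
      _ = ((ur : ℝ) : EReal) := huco
  rw [EReal.coe_le_coe_iff] at hfinal
  have hsr_eq : sr = 0 := le_antisymm (by linarith) hsr0
  rw [hsco, hsr_eq]
  rfl
end
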